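/- Let I be a nonempty set. For each n ∈ ℕ let a_n : I × I → ℝ and let a : I × I → ℝ, and suppose that a_n(i,j) → a(i,j) as n → ∞ for every i, j ∈ I. Suppose moreover that for each n there exist a real inner product space H_n and families (α^n_i)_{i∈I}, (β^n_j)_{j∈I} in H_n such that a_n(i,j) = ‖α^n_i − β^n_j‖²_{H_n} for all i, j ∈ I. Then there exist a real Hilbert space H and families (α_i)_{i∈I}, (β_j)_{j∈I} in H such that a(i,j) = ‖α_i − β_j‖²_H for all i, j ∈ I. -/

import Mathlib

/-- A representation of `a : I × I → ℝ` as squared distances `‖α_i - β_j‖²` between two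
families of points of a real inner product space. -/
structure SqDistInnerRepr {I : Type} (a : I × I → ℝ) where
  H : Type
  [normedAddCommGroup : NormedAddCommGroup H]
  [innerProductSpace : InnerProductSpace ℝ H]
  α : I → H
  β : I → H
  repr : ∀ i j : I, a (i, j) = ‖α i - β j‖ ^ 2

/-- A representation of `a : I × I → ℝ` as squared distances `‖α_i - β_j‖²` between two
families of points of a real Hilbert space. -/
structure SqDistHilbertRepr {I : Type} (a : I × I → ℝ) where
  H : Type
  [normedAddCommGroup : NormedAddCommGroup H]
  [innerProductSpace : InnerProductSpace ℝ H]
  [completeSpace : CompleteSpace H]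
  α : I → H
  β : I → H
  repr : ∀ i j : I, a (i, j) = ‖α i - β j‖ ^ 2

attribute [instance] SqDistInnerRepr.normedAddCommGroup SqDistInnerRepr.innerProductSpace

open Filter

private lemma exists_bound_of_tendsto {f : ℕ → ℝ} {L : ℝ}
    (h : Tendsto f atTop (nhds L)) : ∃ C, ∀ n, |f n| ≤ C := by
  obtain ⟨C1, hC1⟩ := h.bddAbove_range
  obtain ⟨C2, hC2⟩ := h.bddBelow_range
  refine ⟨max C1 (-C2), fun n => abs_le.2 ⟨?_, ?_⟩⟩
  · have h2 := hC2 (Set.mem_range_self n)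
    have : -max C1 (-C2) ≤ -(-C2) := neg_le_neg (le_max_right _ _)
    simpa using this.trans (by simpa using h2)
  · exact (hC1 (Set.mem_range_self n)).trans (le_max_left _ _)

private lemma exists_ultrafilter_limit (u : Ultrafilter ℕ) {f : ℕ → ℝ} {C : ℝ}
    (h : ∀ n, |f n| ≤ C) : ∃ L, Tendsto f ↑u (nhds L) := by
  have hle : ↑(u.map f) ≤ Filter.principal (Set.Icc (-C) C) := by
    refine Filter.le_principal_iff.2 ?_
    have : Set.Icc (-C) C ∈ Filter.map f ↑u := by
      refine Filter.mem_map.2 ?_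
      have : (f ⁻¹' Set.Icc (-C) C) = Set.univ := by
        ext n
        simp only [Set.mem_preimage, Set.mem_Icc, Set.mem_univ, iff_true]
        exact abs_le.1 (h n)
      rw [this]
      exact Filter.univ_mem
    exact this
  obtain ⟨L, _, hL⟩ := isCompact_Icc.ultrafilter_le_nhds (u.map f) hle
  exact ⟨L, hL⟩

private lemma repr_of_kernel {I : Type} (b : I × I → ℝ) (K : I ⊕ I → I ⊕ I → ℝ)
    (hKsymm : ∀ x y, K x y = K y x)
    (hKpos : ∀ (s : Finset (I ⊕ I)) (c : (I ⊕ I) → ℝ),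
      0 ≤ ∑ x ∈ s, ∑ y ∈ s, c x * (c y * K x y))
    (hKb : ∀ i j, K (Sum.inl i) (Sum.inl i) + K (Sum.inr j) (Sum.inr j)
      - 2 * K (Sum.inl i) (Sum.inr j) = b (i, j)) :
    Nonempty (SqDistHilbertRepr b) := by
  classical
  let B : ((I ⊕ I) →₀ ℝ) →ₗ[ℝ] ((I ⊕ I) →₀ ℝ) →ₗ[ℝ] ℝ :=
    Finsupp.lift (((I ⊕ I) →₀ ℝ) →ₗ[ℝ] ℝ) ℝ (I ⊕ I)
      (fun x => Finsupp.lift ℝ ℝ (I ⊕ I) (fun y => K x y))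
  have hB : ∀ f h : (I ⊕ I) →₀ ℝ,
      B f h = ∑ x ∈ f.support, ∑ y ∈ h.support, f x * (h y * K x y) := by
    intro f h
    rw [show B = Finsupp.lift (((I ⊕ I) →₀ ℝ) →ₗ[ℝ] ℝ) ℝ (I ⊕ I)
      (fun x => Finsupp.lift ℝ ℝ (I ⊕ I) (fun y => K x y)) from rfl]
    rw [Finsupp.lift_apply, Finsupp.sum, LinearMap.sum_apply]
    refine Finset.sum_congr rfl fun x _ => ?_
    rw [LinearMap.smul_apply, Finsupp.lift_apply, Finsupp.sum, smul_eq_mul, Finset.mul_sum]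
    refine Finset.sum_congr rfl fun y _ => ?_
    rw [smul_eq_mul]
  have hBsymm : ∀ f h : (I ⊕ I) →₀ ℝ, B f h = B h f := by
    intro f h
    rw [hB, hB, Finset.sum_comm]
    refine Finset.sum_congr rfl fun y _ => Finset.sum_congr rfl fun x _ => ?_
    rw [hKsymm x y]; ring
  letI core : PreInnerProductSpace.Core ℝ ((I ⊕ I) →₀ ℝ) :=
    { inner := fun f h => B f h
      conj_inner_symm := fun f h => by
        simp only [starRingEnd_apply, star_trivial]
        exact hBsymm h f
      re_inner_nonneg := fun f => by
        simpa using hKpos f.support f |>.trans_eq (hB f f).symm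
      add_left := fun f h k => by simp only [map_add, LinearMap.add_apply]
      smul_left := fun f h c => by
        simp only [map_smul, LinearMap.smul_apply, smul_eq_mul, starRingEnd_apply, star_trivial] }
  letI : SeminormedAddCommGroup ((I ⊕ I) →₀ ℝ) := InnerProductSpace.Core.toSeminormedAddCommGroup (𝕜 := ℝ)
  letI : NormedSpace ℝ ((I ⊕ I) →₀ ℝ) := InnerProductSpace.Core.toNormedSpace (𝕜 := ℝ)
  letI : Inner ℝ ((I ⊕ I) →₀ ℝ) := core.toInner
  letI : InnerProductSpace ℝ ((I ⊕ I) →₀ ℝ) :=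
    { (inferInstance : NormedSpace ℝ ((I ⊕ I) →₀ ℝ)),
      (inferInstance : Inner ℝ ((I ⊕ I) →₀ ℝ)) with
      norm_sq_eq_re_inner := fun f => by
        have h1 : ‖f‖ = Real.sqrt (RCLike.re (inner ℝ f f)) := rfl
        rw [h1, Real.sq_sqrt]
        exact core.re_inner_nonneg f
      conj_inner_symm := core.conj_inner_symm
      add_left := core.add_left
      smul_left := core.smul_left }
  let H := UniformSpace.Completion ((I ⊕ I) →₀ ℝ)
  let φ : I ⊕ I → H := fun x => ((Finsupp.single x (1 : ℝ) : (I ⊕ I) →₀ ℝ) : H)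
  have hφ : ∀ x y, (inner ℝ (φ x) (φ y) : ℝ) = K x y := by
    intro x y
    rw [UniformSpace.Completion.inner_coe]
    show B (Finsupp.single x 1) (Finsupp.single y 1) = K x y
    rw [hB]
    rw [Finsupp.support_single_ne_zero x one_ne_zero,
      Finsupp.support_single_ne_zero y one_ne_zero]
    simp
  refine ⟨{ H := H, α := fun i => φ (Sum.inl i), β := fun j => φ (Sum.inr j), repr := ?_ }⟩
  intro i j
  have h1 := norm_sub_sq_real (φ (Sum.inl i)) (φ (Sum.inr j))
  have h2 : ‖φ (Sum.inl i)‖ ^ 2 = K (Sum.inl i) (Sum.inl i) := by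
    rw [← real_inner_self_eq_norm_sq, hφ]
  have h3 : ‖φ (Sum.inr j)‖ ^ 2 = K (Sum.inr j) (Sum.inr j) := by
    rw [← real_inner_self_eq_norm_sq, hφ]
  rw [h1, h2, h3, hφ]
  linarith [hKb i j]


theorem sq_dist_repr_closed_under_pointwise_limits {I : Type} [Nonempty I]
    (a : ℕ → I × I → ℝ) (b : I × I → ℝ)
    (hlim : ∀ i j : I, Filter.Tendsto (fun n => a n (i, j)) Filter.atTop (nhds (b (i, j))))
    (hrepr : ∀ n : ℕ, Nonempty (SqDistInnerRepr (a n))) :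
    Nonempty (SqDistHilbertRepr b) := by
  classical
  obtain ⟨i₀⟩ := ‹Nonempty I›
  let r : ∀ n, SqDistInnerRepr (a n) := fun n => (hrepr n).some
  let γ : ∀ n, I ⊕ I → (r n).H := fun n => Sum.elim (r n).α (r n).β
  let g : ∀ n, I ⊕ I → (r n).H := fun n x => γ n x - (r n).α i₀
  -- distances to the base point, expressed through a n
  have hdist : ∀ n i j, ‖(r n).α i - (r n).β j‖ = Real.sqrt (a n (i, j)) := by
    intro n i j
    rw [(r n).repr i j, Real.sqrt_sq (norm_nonneg _)]
  -- each coordinate of g is bounded in norm, uniformly in n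
  have hbound : ∀ x : I ⊕ I, ∃ C, ∀ n, ‖g n x‖ ≤ C := by
    intro x
    cases x with
    | inl i =>
      have ht : Tendsto (fun n => Real.sqrt (a n (i, i₀)) + Real.sqrt (a n (i₀, i₀)))
          atTop (nhds (Real.sqrt (b (i, i₀)) + Real.sqrt (b (i₀, i₀)))) :=
        ((hlim i i₀).sqrt).add ((hlim i₀ i₀).sqrt)
      obtain ⟨C, hC⟩ := exists_bound_of_tendsto ht
      refine ⟨C, fun n => ?_⟩
      have h1 : g n (Sum.inl i) = ((r n).α i - (r n).β i₀) - ((r n).α i₀ - (r n).β i₀) := by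
        simp only [g, γ, Sum.elim_inl]
        abel_nf
      calc ‖g n (Sum.inl i)‖
          ≤ ‖(r n).α i - (r n).β i₀‖ + ‖(r n).α i₀ - (r n).β i₀‖ := by
            rw [h1]; exact norm_sub_le _ _
        _ = Real.sqrt (a n (i, i₀)) + Real.sqrt (a n (i₀, i₀)) := by
            rw [hdist, hdist]
        _ ≤ C := (le_abs_self _).trans (hC n)
    | inr j =>
      obtain ⟨C, hC⟩ := exists_bound_of_tendsto ((hlim i₀ j).sqrt)
      refine ⟨C, fun n => ?_⟩
      have h1 : ‖g n (Sum.inr j)‖ = ‖(r n).α i₀ - (r n).β j‖ := by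
        simp only [g, γ, Sum.elim_inr]
        rw [← norm_neg]
        congr 1
        abel_nf
      rw [h1, hdist]
      exact (le_abs_self _).trans (hC n)
  choose C hC using hbound
  have hCnn : ∀ x, 0 ≤ C x := fun x => (norm_nonneg _).trans (hC x 0)
  -- the ultrafilter
  let u : Ultrafilter ℕ := Ultrafilter.of atTop
  have hu : ↑u ≤ (atTop : Filter ℕ) := Ultrafilter.of_le _
  -- the limit kernel
  have hKex : ∀ x y : I ⊕ I, ∃ L,
      Tendsto (fun n => (inner ℝ (g n x) (g n y) : ℝ)) ↑u (nhds L) := by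
    intro x y
    refine exists_ultrafilter_limit u (C := C x * C y) fun n => ?_
    calc |(inner ℝ (g n x) (g n y) : ℝ)| ≤ ‖g n x‖ * ‖g n y‖ := abs_real_inner_le_norm _ _
      _ ≤ C x * C y :=
        mul_le_mul (hC x n) (hC y n) (norm_nonneg _) (hCnn x)
  choose K hK using hKex
  -- symmetry of the kernel
  have hKsymm : ∀ x y, K x y = K y x := fun x y =>
    tendsto_nhds_unique (hK x y) ((hK y x).congr fun n => real_inner_comm _ _)
  -- the kernel recovers b on mixed pairs
  have hKb : ∀ i j, K (Sum.inl i) (Sum.inl i) + K (Sum.inr j) (Sum.inr j)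
      - 2 * K (Sum.inl i) (Sum.inr j) = b (i, j) := by
    intro i j
    have heq : ∀ n, (inner ℝ (g n (Sum.inl i)) (g n (Sum.inl i)) : ℝ)
        + inner ℝ (g n (Sum.inr j)) (g n (Sum.inr j))
        - 2 * inner ℝ (g n (Sum.inl i)) (g n (Sum.inr j)) = a n (i, j) := by
      intro n
      have h1 : a n (i, j) = ‖g n (Sum.inl i) - g n (Sum.inr j)‖ ^ 2 := by
        rw [(r n).repr i j]
        congr 1
        simp only [g, γ, Sum.elim_inl, Sum.elim_inr]
        abel_nf
      have h2 := norm_sub_sq_real (g n (Sum.inl i)) (g n (Sum.inr j))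
      have h3 := real_inner_self_eq_norm_sq (g n (Sum.inl i))
      have h4 := real_inner_self_eq_norm_sq (g n (Sum.inr j))
      rw [h1, h2]
      linarith
    exact tendsto_nhds_unique
      ((((hK _ _).add (hK _ _)).sub ((hK _ _).const_mul 2)).congr heq)
      ((hlim i j).mono_left hu)
  -- positivity of the kernel
  have hKpos : ∀ (s : Finset (I ⊕ I)) (c : (I ⊕ I) → ℝ),
      0 ≤ ∑ x ∈ s, ∑ y ∈ s, c x * (c y * K x y) := by
    intro s c
    have ht : Tendsto (fun n => ∑ x ∈ s, ∑ y ∈ s, c x * (c y * (inner ℝ (g n x) (g n y) : ℝ)))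
        ↑u (nhds (∑ x ∈ s, ∑ y ∈ s, c x * (c y * K x y))) :=
      tendsto_finset_sum _ fun x _ => tendsto_finset_sum _ fun y _ =>
        (((hK x y).const_mul (c y)).const_mul (c x))
    refine ge_of_tendsto' ht fun n => ?_
    have hsum : ∑ x ∈ s, ∑ y ∈ s, c x * (c y * (inner ℝ (g n x) (g n y) : ℝ))
        = (inner ℝ (∑ x ∈ s, c x • g n x) (∑ y ∈ s, c y • g n y) : ℝ) := by
      rw [sum_inner]
      refine Finset.sum_congr rfl fun x _ => ?_
      rw [inner_sum]
      refine Finset.sum_congr rfl fun y _ => ?_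
      rw [real_inner_smul_left, real_inner_smul_right]
    rw [hsum]
    exact real_inner_self_nonneg
  exact repr_of_kernel b K hKsymm hKpos hKb
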